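/- Let d_C = [d_1, ..., d_r] be a type C partition of 2n with transpose [s_1, s_2, ...] and r_i = #{j : d_j = i}. Define η_{2i} = min{j : d_1 + ... + d_j ≥ 2i} for 1 ≤ i ≤ n. Then Σ_{i=1}^n η_{2i} = (1/4)Σ_j s_j(s_j + 1) + (1/4)Σ_{i odd} r_i. -/

import Mathlib

/-- A partition of `N`, encoded as a weakly decreasing eventually-zero function. -/
def IsPartitionFun (d : ℕ → ℕ) (N : ℕ) : Prop :=
  Antitone d ∧ ∃ m, (∀ i, m ≤ i → d i = 0) ∧ ∑ i ∈ Finset.range m, d i = N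

/-- Multiplicity `r_i` of the part `i` in `d`. -/
noncomputable def partMult (d : ℕ → ℕ) (i : ℕ) : ℕ := Set.ncard {j | d j = i}

/-- Type C partition of `N`: every odd part occurs with even multiplicity. -/
def IsTypeC (d : ℕ → ℕ) (N : ℕ) : Prop :=
  IsPartitionFun d N ∧ ∀ i, 0 < i → Odd i → Even (partMult d i)

/-- The transpose (dual) partition: `(d^t)_i = #{j : d_j ≥ i}` (0-indexed:
`ptranspose d i = s_{i+1}`). -/
noncomputable def ptranspose (d : ℕ → ℕ) : ℕ → ℕ := fun i => Set.ncard {j | i + 1 ≤ d j}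

/-- A special type C partition: its transpose is also of type C. -/
def IsSpecialC (d : ℕ → ℕ) (N : ℕ) : Prop := IsTypeC d N ∧ IsTypeC (ptranspose d) N

/-- `η_m = min {j : d_1 + ... + d_j ≥ m}`. -/
noncomputable def eta (d : ℕ → ℕ) (m : ℕ) : ℕ :=
  sInf {j | m ≤ ∑ l ∈ Finset.range j, d l}


open Finset

private lemma downclosed_eq_range (t : Finset ℕ) (h : ∀ a b : ℕ, a ≤ b → b ∈ t → a ∈ t) :
    t = Finset.range t.card := by
  have hsub : t ⊆ Finset.range t.card := by
    intro x hx
    rw [Finset.mem_range]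
    have hr : Finset.range (x + 1) ⊆ t := fun y hy =>
      h y x (Nat.lt_succ_iff.mp (Finset.mem_range.mp hy)) hx
    have := Finset.card_le_card hr
    simpa using this
  exact Finset.eq_of_subset_of_card_le hsub (by simp)

private lemma ptranspose_eq_card (d : ℕ → ℕ) (m : ℕ) (hm0 : ∀ i, m ≤ i → d i = 0) (j : ℕ) :
    ptranspose d j = ((Finset.range m).filter (fun l => j + 1 ≤ d l)).card := by
  rw [ptranspose]
  have hs : {l | j + 1 ≤ d l} = ↑((Finset.range m).filter (fun l => j + 1 ≤ d l)) := by
    ext l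
    simp only [Set.mem_setOf_eq, Finset.coe_filter, Finset.mem_range]
    constructor
    · intro h
      refine ⟨?_, h⟩
      by_contra hl
      push_neg at hl
      have := hm0 l hl
      omega
    · tauto
  rw [hs, Set.ncard_coe_finset]

private lemma partMult_eq_card (d : ℕ → ℕ) (m : ℕ) (hm0 : ∀ i, m ≤ i → d i = 0) (i : ℕ)
    (hi : 0 < i) (hall : ∀ l, d l = i → l < m) :
    partMult d i = ((Finset.range m).filter (fun l => d l = i)).card := by
  rw [partMult]
  have hs : {l | d l = i} = ↑((Finset.range m).filter (fun l => d l = i)) := by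
    ext l
    simp only [Set.mem_setOf_eq, Finset.coe_filter, Finset.mem_range]
    constructor
    · intro h; exact ⟨hall l h, h⟩
    · tauto
  rw [hs, Set.ncard_coe_finset]
private lemma core_parity (n : ℕ) (d : ℕ → ℕ) (hanti : Antitone d) (m : ℕ)
    (hmsum : ∑ l ∈ Finset.range m, d l = 2 * n)
    (hC : ∀ i, 0 < i → Odd i → Even (partMult d i)) :
    ∀ j, j < m → Odd (∑ l ∈ Finset.range j, d l) → Odd (d j) := by
  intro j hj hS
  by_contra hdj
  rw [Nat.not_odd_iff_even] at hdj
  rw [Nat.odd_iff, ← Nat.not_even_iff] at hS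
  apply hS
  rw [Finset.even_sum_iff_even_card_odd]
  set t := (Finset.range j).filter (fun x => Odd (d x)) with ht
  have hcard : t.card = ∑ i ∈ (Finset.range (2 * n + 1)).filter (fun i => Odd i),
      (t.filter (fun x => d x = i)).card := by
    apply Finset.card_eq_sum_card_fiberwise
    intro x hx
    simp only [ht, Finset.mem_coe, Finset.mem_filter, Finset.mem_range] at hx ⊢
    have hxm : x < m := lt_of_lt_of_le hx.1 (le_of_lt hj)
    have hx2 : d x ≤ 2 * n := by
      calc d x ≤ ∑ l ∈ Finset.range m, d l :=
            Finset.single_le_sum (fun _ _ => Nat.zero_le _) (Finset.mem_range.mpr hxm)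
        _ = 2 * n := hmsum
    exact ⟨by omega, hx.2⟩
  rw [hcard]
  apply Finset.even_sum
  intro i hi
  simp only [Finset.mem_filter, Finset.mem_range] at hi
  have hodd := hi.2
  have hfe : t.filter (fun x => d x = i) = (Finset.range j).filter (fun x => d x = i) := by
    ext x
    simp only [ht, Finset.mem_filter, Finset.mem_range]
    constructor
    · rintro ⟨⟨h1, _⟩, h3⟩; exact ⟨h1, h3⟩
    · rintro ⟨h1, h3⟩; exact ⟨⟨h1, h3 ▸ hodd⟩, h3⟩
  rw [hfe]
  by_cases hcase : ∃ l, j ≤ l ∧ d l = i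
  · obtain ⟨l, hl, hdl⟩ := hcase
    have hemp : (Finset.range j).filter (fun x => d x = i) = ∅ := by
      rw [Finset.filter_eq_empty_iff]
      intro x hx hdx
      have h1 : d j ≤ d x := hanti (le_of_lt (Finset.mem_range.mp hx))
      have h2 : d l ≤ d j := hanti hl
      have hji : d j = i := by omega
      rw [Nat.even_iff] at hdj
      rw [Nat.odd_iff] at hodd
      omega
    rw [hemp]
    simp
  · push_neg at hcase
    have hpm : partMult d i = ((Finset.range j).filter (fun x => d x = i)).card := by
      rw [partMult]
      have hs : {l | d l = i} = ↑((Finset.range j).filter (fun x => d x = i)) := by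
        ext l
        simp only [Set.mem_setOf_eq, Finset.coe_filter, Finset.mem_range]
        constructor
        · intro h
          refine ⟨?_, h⟩
          by_contra hl
          push_neg at hl
          exact hcase l hl h
        · tauto
      rw [hs, Set.ncard_coe_finset]
    rw [← hpm]
    exact hC i (by rcases hodd with ⟨k, hk⟩; omega) hodd

private lemma eta_eq_card (n : ℕ) (d : ℕ → ℕ) (hanti : Antitone d) (m : ℕ)
    (hmsum : ∑ l ∈ Finset.range m, d l = 2 * n) (k : ℕ) (hk2 : k ≤ 2 * n) :
    eta d k = ((Finset.range m).filter (fun j => ∑ l ∈ Finset.range j, d l < k)).card := by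
  have hmono : Monotone (fun j => ∑ l ∈ Finset.range j, d l) := fun a b hab =>
    Finset.sum_le_sum_of_subset (Finset.range_subset_range.mpr hab)
  set t := ((Finset.range m).filter (fun j => ∑ l ∈ Finset.range j, d l < k)).card with htdef
  have hfr : (Finset.range m).filter (fun j => ∑ l ∈ Finset.range j, d l < k)
      = Finset.range t := by
    apply downclosed_eq_range
    intro a b hab hb
    simp only [Finset.mem_filter, Finset.mem_range] at hb ⊢
    exact ⟨lt_of_le_of_lt hab hb.1, lt_of_le_of_lt (hmono hab) hb.2⟩
  have htm : t ≤ m := by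
    have := Finset.card_filter_le (Finset.range m) (fun j => ∑ l ∈ Finset.range j, d l < k)
    simpa using this
  have hSt : k ≤ ∑ l ∈ Finset.range t, d l := by
    rcases eq_or_lt_of_le htm with heq | hlt
    · rw [heq, hmsum]; exact hk2
    · by_contra hcon
      push_neg at hcon
      have hmem : t ∈ Finset.range t := by
        rw [← hfr]
        simp only [Finset.mem_filter, Finset.mem_range]
        exact ⟨hlt, hcon⟩
      simp at hmem
  apply le_antisymm
  · rw [eta]
    exact Nat.sInf_le hSt
  · rw [eta]
    apply le_csInf (s := {j | k ≤ ∑ l ∈ Finset.range j, d l}) ⟨_, hSt⟩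
    intro b hb
    by_contra hbt
    push_neg at hbt
    have hmem : b ∈ Finset.range t := Finset.mem_range.mpr hbt
    rw [← hfr] at hmem
    simp only [Finset.mem_filter, Finset.mem_range] at hmem
    simp only [Set.mem_setOf_eq] at hb
    omega
private lemma pairing (n : ℕ) (d : ℕ → ℕ) (hanti : Antitone d) (m : ℕ)
    (hmsum : ∑ l ∈ Finset.range m, d l = 2 * n)
    (hC : ∀ i, 0 < i → Odd i → Even (partMult d i)) :
    ((Finset.range m).filter (fun l => Odd (d l))).card
      = 2 * ((Finset.range m).filter (fun j => Odd (∑ l ∈ Finset.range j, d l))).card := by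
  have core := core_parity n d hanti m hmsum hC
  set A := (Finset.range m).filter (fun j => Odd (∑ l ∈ Finset.range j, d l)) with hA
  have hA1 : ∀ j ∈ A, 1 ≤ j ∧ j < m ∧ Odd (d j) ∧ Odd (d (j - 1)) := by
    intro j hj
    simp only [hA, Finset.mem_filter, Finset.mem_range] at hj
    obtain ⟨hjm, hjo⟩ := hj
    have hj1 : 1 ≤ j := by
      by_contra h
      push_neg at h
      interval_cases j
      simp [Nat.odd_iff] at hjo
    have hdj : Odd (d j) := core j hjm hjo
    have hsplit : ∑ l ∈ Finset.range j, d l = ∑ l ∈ Finset.range (j - 1), d l + d (j - 1) := by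
      conv_lhs => rw [show j = (j - 1) + 1 by omega]
      rw [Finset.sum_range_succ]
    have hdj1 : Odd (d (j - 1)) := by
      by_contra he
      rw [Nat.not_odd_iff_even] at he
      have hsj1 : Odd (∑ l ∈ Finset.range (j - 1), d l) := by
        rw [Nat.odd_iff] at hjo ⊢
        rw [Nat.even_iff] at he
        omega
      have := core (j - 1) (by omega) hsj1
      rw [Nat.odd_iff] at this
      rw [Nat.even_iff] at he
      omega
    exact ⟨hj1, hjm, hdj, hdj1⟩
  have hadj : ∀ x ∈ A, ∀ y ∈ A, x ≠ y → x + 1 ≠ y := by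
    intro x hx y hy _ hxy
    obtain ⟨_, hxm, hdx, _⟩ := hA1 x hx
    simp only [hA, Finset.mem_filter, Finset.mem_range] at hx hy
    have hs : ∑ l ∈ Finset.range (x + 1), d l = ∑ l ∈ Finset.range x, d l + d x :=
      Finset.sum_range_succ d x
    rw [← hxy] at hy
    rw [Nat.odd_iff] at hdx hy hx
    omega
  have hdisj : ∀ x ∈ A, ∀ y ∈ A, x ≠ y →
      Disjoint ({x - 1, x} : Finset ℕ) {y - 1, y} := by
    intro x hx y hy hxy
    obtain ⟨hx1, _, _, _⟩ := hA1 x hx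
    obtain ⟨hy1, _, _, _⟩ := hA1 y hy
    have h1 : x + 1 ≠ y := hadj x hx y hy hxy
    have h2 : y + 1 ≠ x := hadj y hy x hx (Ne.symm hxy)
    simp only [Finset.disjoint_left, Finset.mem_insert, Finset.mem_singleton]
    rintro a (rfl | rfl) hb <;> rcases hb with h | h <;> omega
  have hBA : (Finset.range m).filter (fun l => Odd (d l))
      = A.biUnion (fun j => {j - 1, j}) := by
    ext l
    simp only [Finset.mem_filter, Finset.mem_range, Finset.mem_biUnion, Finset.mem_insert,
      Finset.mem_singleton]
    constructor
    · rintro ⟨hlm, hodd⟩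
      by_cases h1 : Odd (∑ x ∈ Finset.range l, d x)
      · refine ⟨l, ?_, Or.inr rfl⟩
        simp only [hA, Finset.mem_filter, Finset.mem_range]
        exact ⟨hlm, h1⟩
      · have hs : ∑ x ∈ Finset.range (l + 1), d x = ∑ x ∈ Finset.range l, d x + d l :=
          Finset.sum_range_succ d l
        rw [Nat.not_odd_iff_even, Nat.even_iff] at h1
        have h2 : Odd (∑ x ∈ Finset.range (l + 1), d x) := by
          rw [Nat.odd_iff] at hodd ⊢
          omega
        have hl1 : l + 1 < m := by
          rcases lt_or_ge (l + 1) m with h | h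
          · exact h
          · have hl1m : l + 1 = m := by omega
            rw [hl1m, hmsum, Nat.odd_iff] at h2
            omega
        refine ⟨l + 1, ?_, Or.inl (by omega)⟩
        simp only [hA, Finset.mem_filter, Finset.mem_range]
        exact ⟨hl1, h2⟩
    · rintro ⟨j, hj, hlj⟩
      obtain ⟨hj1, hjm, hdj, hdj1⟩ := hA1 j hj
      rcases hlj with h | h
      · subst h
        exact ⟨by omega, hdj1⟩
      · subst h
        exact ⟨hjm, hdj⟩
  rw [hBA, Finset.card_biUnion hdisj]
  have hc2 : ∀ j ∈ A, ({j - 1, j} : Finset ℕ).card = 2 := by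
    intro j hj
    obtain ⟨hj1, _, _, _⟩ := hA1 j hj
    rw [Finset.card_insert_of_notMem (by simp; omega), Finset.card_singleton]
  rw [Finset.sum_congr rfl hc2, Finset.sum_const, smul_eq_mul, mul_comm]
private lemma multsum (n : ℕ) (d : ℕ → ℕ) (m : ℕ) (hm0 : ∀ i, m ≤ i → d i = 0)
    (hmsum : ∑ l ∈ Finset.range m, d l = 2 * n) :
    ∑ i ∈ (Finset.range (2 * n + 1)).filter (fun i => Odd i), partMult d i
      = ((Finset.range m).filter (fun l => Odd (d l))).card := by
  have hdle : ∀ l, l < m → d l ≤ 2 * n := by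
    intro l hl
    calc d l ≤ ∑ x ∈ Finset.range m, d x :=
          Finset.single_le_sum (fun _ _ => Nat.zero_le _) (Finset.mem_range.mpr hl)
      _ = 2 * n := hmsum
  rw [Finset.card_eq_sum_card_fiberwise (f := d)
    (t := (Finset.range (2 * n + 1)).filter (fun i => Odd i)) ?_]
  · apply Finset.sum_congr rfl
    intro i hi
    simp only [Finset.mem_filter, Finset.mem_range] at hi
    have hi0 : 0 < i := by rcases hi.2 with ⟨k, hk⟩; omega
    rw [partMult_eq_card d m hm0 i hi0 (fun l hl => by
      by_contra hc; push_neg at hc; rw [hm0 l hc] at hl; omega)]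
    congr 1
    ext x
    simp only [Finset.mem_filter, Finset.mem_range]
    constructor
    · rintro ⟨h1, h3⟩; exact ⟨⟨h1, h3 ▸ hi.2⟩, h3⟩
    · rintro ⟨⟨h1, _⟩, h3⟩; exact ⟨h1, h3⟩
  · intro x hx
    simp only [Finset.mem_coe, Finset.mem_filter, Finset.mem_range] at hx ⊢
    exact ⟨by have := hdle x hx.1; omega, hx.2⟩

private lemma transp_sum (n : ℕ) (d : ℕ → ℕ) (hanti : Antitone d) (m : ℕ)
    (hm0 : ∀ i, m ≤ i → d i = 0) (hmsum : ∑ l ∈ Finset.range m, d l = 2 * n) :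
    ∑ j ∈ Finset.range (2 * n), ((ptranspose d j : ℚ) * ((ptranspose d j : ℚ) + 1))
      = 2 * ∑ l ∈ Finset.range m, ((l : ℚ) + 1) * (d l : ℚ) := by
  have hdle : ∀ l, l < m → d l ≤ 2 * n := by
    intro l hl
    calc d l ≤ ∑ x ∈ Finset.range m, d x :=
          Finset.single_le_sum (fun _ _ => Nat.zero_le _) (Finset.mem_range.mpr hl)
      _ = 2 * n := hmsum
  have h1 : ∀ j : ℕ, (ptranspose d j : ℚ) * ((ptranspose d j : ℚ) + 1)
      = 2 * ∑ l ∈ (Finset.range m).filter (fun l => j + 1 ≤ d l), ((l : ℚ) + 1) := by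
    intro j
    rw [ptranspose_eq_card d m hm0 j]
    set s := ((Finset.range m).filter (fun l => j + 1 ≤ d l)).card with hs
    have hfr : (Finset.range m).filter (fun l => j + 1 ≤ d l) = Finset.range s := by
      apply downclosed_eq_range
      intro a b hab hb
      simp only [Finset.mem_filter, Finset.mem_range] at hb ⊢
      exact ⟨lt_of_le_of_lt hab hb.1, le_trans hb.2 (hanti hab)⟩
    rw [hfr]
    have hg : ∀ t : ℕ, ∑ l ∈ Finset.range t, ((l : ℚ) + 1) = t * (t + 1) / 2 := by
      intro t
      induction t with
      | zero => simp
      | succ k ih =>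
        rw [Finset.sum_range_succ, ih]
        push_cast
        ring
    rw [hg s]
    ring
  rw [Finset.sum_congr rfl (fun j _ => h1 j), ← Finset.mul_sum]
  congr 1
  have h2 : ∀ j : ℕ, ∑ l ∈ (Finset.range m).filter (fun l => j + 1 ≤ d l), ((l : ℚ) + 1)
      = ∑ l ∈ Finset.range m, if j + 1 ≤ d l then ((l : ℚ) + 1) else 0 :=
    fun j => Finset.sum_filter _ _
  rw [Finset.sum_congr rfl (fun j _ => h2 j), Finset.sum_comm]
  apply Finset.sum_congr rfl
  intro l hl
  rw [Finset.mem_range] at hl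
  have hfil : (Finset.range (2 * n)).filter (fun j => j + 1 ≤ d l) = Finset.range (d l) := by
    ext j
    simp only [Finset.mem_filter, Finset.mem_range]
    have := hdle l hl
    omega
  rw [← Finset.sum_filter, hfil, Finset.sum_const, nsmul_eq_mul, Finset.card_range]
  ring
theorem stmt12 (n : ℕ) (d : ℕ → ℕ) (hd : IsTypeC d (2 * n)) :
    (∑ i ∈ Finset.Icc 1 n, (eta d (2 * i) : ℚ))
      = (1 / 4) * ∑ j ∈ Finset.range (2 * n),
            ((ptranspose d j : ℚ) * ((ptranspose d j : ℚ) + 1))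
        + (1 / 4) * ∑ i ∈ (Finset.range (2 * n + 1)).filter (fun i => Odd i),
            (partMult d i : ℚ) := by
  obtain ⟨⟨hanti, m, hm0, hmsum⟩, hC⟩ := hd
  have hSle : ∀ j, j ≤ m → ∑ l ∈ Finset.range j, d l ≤ 2 * n := by
    intro j hj
    rw [← hmsum]
    exact Finset.sum_le_sum_of_subset (Finset.range_subset_range.mpr hj)
  -- Step 1 (ℕ): ∑ η = ∑_j (n - S j / 2)
  have key1 : ∑ i ∈ Finset.Icc 1 n, eta d (2 * i)
      = ∑ j ∈ Finset.range m, (n - (∑ l ∈ Finset.range j, d l) / 2) := by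
    rw [Finset.sum_congr rfl
      (fun i hi => eta_eq_card n d hanti m hmsum (2 * i)
        (by rw [Finset.mem_Icc] at hi; omega))]
    rw [Finset.sum_congr rfl (fun i _ => Finset.card_filter _ _), Finset.sum_comm]
    apply Finset.sum_congr rfl
    intro j hj
    rw [← Finset.card_filter]
    have hfi : (Finset.Icc 1 n).filter (fun i => ∑ l ∈ Finset.range j, d l < 2 * i)
        = Finset.Ioc ((∑ l ∈ Finset.range j, d l) / 2) n := by
      ext i
      simp only [Finset.mem_filter, Finset.mem_Icc, Finset.mem_Ioc]
      have := hSle j (le_of_lt (Finset.mem_range.mp hj))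
      omega
    rw [hfi, Nat.card_Ioc]
  -- Step 2: pointwise split
  have key2 : ∀ j ∈ Finset.range m,
      ((n - (∑ l ∈ Finset.range j, d l) / 2 : ℕ) : ℚ)
        = (1 / 2) * ((∑ l ∈ Finset.Ico j m, d l : ℕ) : ℚ)
          + (1 / 2) * (((∑ l ∈ Finset.range j, d l) % 2 : ℕ) : ℚ) := by
    intro j hj
    have hjm := Finset.mem_range.mp hj
    have h2 : ∑ l ∈ Finset.range j, d l + ∑ l ∈ Finset.Ico j m, d l = 2 * n := by
      rw [Finset.sum_range_add_sum_Ico _ (le_of_lt hjm), hmsum]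
    have hle := hSle j (le_of_lt hjm)
    have hnat : 2 * (n - (∑ l ∈ Finset.range j, d l) / 2)
        = ∑ l ∈ Finset.Ico j m, d l + (∑ l ∈ Finset.range j, d l) % 2 := by
      omega
    have hq := congrArg (Nat.cast : ℕ → ℚ) hnat
    push_cast at hq ⊢
    linarith
  -- Step 3: ∑_j ∑_{Ico j m} d = ∑_l (l+1) d l
  have key3 : ∑ j ∈ Finset.range m, ((∑ l ∈ Finset.Ico j m, d l : ℕ) : ℚ)
      = ∑ l ∈ Finset.range m, ((l : ℚ) + 1) * (d l : ℚ) := by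
    have h1 : ∀ j : ℕ, ((∑ l ∈ Finset.Ico j m, d l : ℕ) : ℚ)
        = ∑ l ∈ Finset.range m, if j ≤ l then (d l : ℚ) else 0 := by
      intro j
      have : Finset.Ico j m = (Finset.range m).filter (fun l => j ≤ l) := by
        ext l
        simp only [Finset.mem_Ico, Finset.mem_filter, Finset.mem_range]
        omega
      rw [this]
      push_cast
      rw [Finset.sum_filter]
    rw [Finset.sum_congr rfl (fun j _ => h1 j), Finset.sum_comm]
    apply Finset.sum_congr rfl
    intro l hl
    have hlm := Finset.mem_range.mp hl
    have hfil : (Finset.range m).filter (fun j => j ≤ l) = Finset.range (l + 1) := by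
      ext j
      simp only [Finset.mem_filter, Finset.mem_range]
      omega
    rw [← Finset.sum_filter, hfil, Finset.sum_const, Finset.card_range, nsmul_eq_mul]
    push_cast
    ring
  -- Step 4: ∑_j S j % 2 = card A  (ℕ)
  have key4 : ∑ j ∈ Finset.range m, (∑ l ∈ Finset.range j, d l) % 2
      = ((Finset.range m).filter (fun j => Odd (∑ l ∈ Finset.range j, d l))).card := by
    rw [Finset.card_filter]
    apply Finset.sum_congr rfl
    intro j _
    by_cases h : Odd (∑ l ∈ Finset.range j, d l)
    · rw [if_pos h, Nat.odd_iff.mp h]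
    · rw [if_neg h]
      rw [Nat.not_odd_iff_even, Nat.even_iff] at h
      exact h
  -- assemble
  have hL : (∑ i ∈ Finset.Icc 1 n, (eta d (2 * i) : ℚ))
      = ((∑ i ∈ Finset.Icc 1 n, eta d (2 * i) : ℕ) : ℚ) := by push_cast; rfl
  rw [hL, key1]
  rw [Nat.cast_sum]
  rw [Finset.sum_congr rfl key2, Finset.sum_add_distrib, ← Finset.mul_sum, ← Finset.mul_sum]
  rw [key3]
  have key4' : ∑ j ∈ Finset.range m, (((∑ l ∈ Finset.range j, d l) % 2 : ℕ) : ℚ)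
      = (((Finset.range m).filter
          (fun j => Odd (∑ l ∈ Finset.range j, d l))).card : ℚ) := by
    rw [← key4]
    push_cast
    rfl
  rw [key4']
  rw [transp_sum n d hanti m hm0 hmsum]
  have hR2 : ∑ i ∈ (Finset.range (2 * n + 1)).filter (fun i => Odd i), (partMult d i : ℚ)
      = 2 * (((Finset.range m).filter
          (fun j => Odd (∑ l ∈ Finset.range j, d l))).card : ℚ) := by
    have h1 := multsum n d m hm0 hmsum
    have h2 := pairing n d hanti m hmsum hC
    have h3 : ∑ i ∈ (Finset.range (2 * n + 1)).filter (fun i => Odd i), partMult d i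
        = 2 * ((Finset.range m).filter
            (fun j => Odd (∑ l ∈ Finset.range j, d l))).card := by rw [h1, h2]
    have hq := congrArg (Nat.cast : ℕ → ℚ) h3
    push_cast at hq
    exact hq
  rw [hR2]
  ring
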